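/- For every graph G, Boppana's objective h(G) has the semidefinite-programming characterization h(G) = |E|/2 − p(G)/4, where p(G) = inf { n·z − 𝟙ᵀd : z ∈ ℝ, d ∈ ℝ^n, and the matrix z·I − P·(A + diag(d))·P is positive semidefinite }, with P = I − J/n. -/

import Mathlib

open Matrix BigOperators Finset

noncomputable section

/-- Adjacency matrix of a graph on `Fin n`, with real entries. -/
def adjA {n : ℕ} (G : SimpleGraph (Fin n)) [DecidableRel G.Adj] :
    Matrix (Fin n) (Fin n) ℝ :=
  Matrix.of fun i j => if G.Adj i j then (1 : ℝ) else 0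

/-- A bisection vector: entries in `{+1, -1}` summing to zero. -/
def IsBisection {n : ℕ} (x : Fin n → ℝ) : Prop :=
  (∀ i, x i = 1 ∨ x i = -1) ∧ ∑ i, x i = 0

/-- Cut width of a `±1` vector: `∑_{{i,j}∈E} (1 - x_i x_j)/2`, written as a sum
over ordered pairs (each edge counted twice, hence the `/4`). -/
def cw {n : ℕ} (G : SimpleGraph (Fin n)) [DecidableRel G.Adj] (x : Fin n → ℝ) : ℝ :=
  (∑ i, ∑ j, adjA G i j * (1 - x i * x j)) / 4

/-- Bisection width: minimum cut width over all bisection vectors. -/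
def bw {n : ℕ} (G : SimpleGraph (Fin n)) [DecidableRel G.Adj] : ℝ :=
  sInf {c | ∃ x : Fin n → ℝ, IsBisection x ∧ cw G x = c}

/-- `λ_S(B)`: supremum of the Rayleigh quotient of `B` over nonzero vectors of
coordinate sum zero. -/
def lamS {n : ℕ} (B : Matrix (Fin n) (Fin n) ℝ) : ℝ :=
  sSup {r | ∃ x : Fin n → ℝ, x ≠ 0 ∧ ∑ i, x i = 0 ∧
    r = (x ⬝ᵥ B.mulVec x) / (∑ i, (x i) ^ 2)}

/-- Sum of all entries of a matrix. -/
def msum {n : ℕ} (M : Matrix (Fin n) (Fin n) ℝ) : ℝ := ∑ i, ∑ j, M i j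

/-- Boppana's function `g(G,d)`. -/
def gB {n : ℕ} (G : SimpleGraph (Fin n)) [DecidableRel G.Adj] (d : Fin n → ℝ) : ℝ :=
  (msum (adjA G + Matrix.diagonal d) - n * lamS (adjA G + Matrix.diagonal d)) / 4

/-- Boppana's lower bound `h(G) = sup_d g(G,d)`. -/
def hB {n : ℕ} (G : SimpleGraph (Fin n)) [DecidableRel G.Adj] : ℝ :=
  sSup {r | ∃ d : Fin n → ℝ, r = gB G d}

/-- Number of edges of `G`. -/
def edgeCount {n : ℕ} (G : SimpleGraph (Fin n)) [DecidableRel G.Adj] : ℕ :=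
  G.edgeFinset.card

/-- The all-ones matrix `J`. -/
def Jmat (n : ℕ) : Matrix (Fin n) (Fin n) ℝ := Matrix.of fun _ _ => (1 : ℝ)

/-- The projection matrix `P = I - J/n`. -/
def Pmat (n : ℕ) : Matrix (Fin n) (Fin n) ℝ := 1 - (n : ℝ)⁻¹ • Jmat n

/-- The primal SDP value `p(G)` for Boppana's optimization. -/
def pSDP {n : ℕ} (G : SimpleGraph (Fin n)) [DecidableRel G.Adj] : ℝ :=
  sInf {r | ∃ (z : ℝ) (d : Fin n → ℝ),
    (z • (1 : Matrix (Fin n) (Fin n) ℝ)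
      - Pmat n * (adjA G + Matrix.diagonal d) * Pmat n).PosSemidef ∧
    r = (n : ℝ) * z - ∑ i, d i}

/-! ### Auxiliary lemmas -/

section Aux
variable {n : ℕ}

lemma quad_expand (M : Matrix (Fin n) (Fin n) ℝ) (x : Fin n → ℝ) :
    x ⬝ᵥ M.mulVec x = ∑ i, ∑ j, M i j * x j * x i := by
  simp only [dotProduct, mulVec, Finset.mul_sum]
  apply Finset.sum_congr rfl; intros; apply Finset.sum_congr rfl; intros; ring

lemma sum_sq_nonneg' (x : Fin n → ℝ) : 0 ≤ ∑ i, x i ^ 2 :=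
  Finset.sum_nonneg fun i _ => sq_nonneg _

lemma abs_mul_le_sum_sq (x : Fin n → ℝ) (i j : Fin n) :
    |x i| * |x j| ≤ ∑ k, x k ^ 2 := by
  have h1 : 2 * |x i| * |x j| ≤ |x i| ^ 2 + |x j| ^ 2 := two_mul_le_add_sq _ _
  have h2 : x i ^ 2 ≤ ∑ k, x k ^ 2 :=
    Finset.single_le_sum (fun k _ => sq_nonneg (x k)) (Finset.mem_univ i)
  have h3 : x j ^ 2 ≤ ∑ k, x k ^ 2 :=
    Finset.single_le_sum (fun k _ => sq_nonneg (x k)) (Finset.mem_univ j)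
  nlinarith [sq_abs (x i), sq_abs (x j)]

lemma quad_abs_bound (M : Matrix (Fin n) (Fin n) ℝ) (x : Fin n → ℝ) :
    x ⬝ᵥ M.mulVec x ≤ (∑ i, ∑ j, |M i j|) * ∑ k, x k ^ 2 := by
  rw [quad_expand, Finset.sum_mul]
  refine Finset.sum_le_sum fun i _ => ?_
  rw [Finset.sum_mul]
  refine Finset.sum_le_sum fun j _ => ?_
  calc M i j * x j * x i ≤ |M i j * x j * x i| := le_abs_self _
    _ = |M i j| * (|x j| * |x i|) := by rw [abs_mul, abs_mul, mul_assoc]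
    _ ≤ |M i j| * ∑ k, x k ^ 2 := by
        refine mul_le_mul_of_nonneg_left ?_ (abs_nonneg _)
        exact abs_mul_le_sum_sq x j i

lemma sum_sq_pos_of_ne_zero {x : Fin n → ℝ} (hx : x ≠ 0) : 0 < ∑ i, x i ^ 2 := by
  obtain ⟨i, hi⟩ := Function.ne_iff.mp hx
  refine Finset.sum_pos' (fun k _ => sq_nonneg _) ⟨i, Finset.mem_univ i, ?_⟩
  exact pow_pos (abs_pos.mpr hi) 2 |> fun h => by rwa [sq_abs] at h

lemma quad_add' (M N : Matrix (Fin n) (Fin n) ℝ) (x : Fin n → ℝ) :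
    x ⬝ᵥ (M + N).mulVec x = x ⬝ᵥ M.mulVec x + x ⬝ᵥ N.mulVec x := by
  rw [add_mulVec, dotProduct_add]

lemma quad_smul_one (t : ℝ) (x : Fin n → ℝ) :
    x ⬝ᵥ (t • (1 : Matrix (Fin n) (Fin n) ℝ)).mulVec x = t * ∑ i, x i ^ 2 := by
  rw [smul_mulVec, one_mulVec, dotProduct_smul]
  simp [dotProduct, sq, Finset.mul_sum]

lemma quad_diagonal (d : Fin n → ℝ) (x : Fin n → ℝ) :
    x ⬝ᵥ (Matrix.diagonal d).mulVec x = ∑ i, d i * x i ^ 2 := by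
  simp only [dotProduct, mulVec_diagonal]
  apply Finset.sum_congr rfl; intros; ring

lemma Pmat_mulVec_apply (v : Fin n → ℝ) (i : Fin n) :
    (Pmat n).mulVec v i = v i - (n : ℝ)⁻¹ * ∑ j, v j := by
  rw [Pmat, sub_mulVec, smul_mulVec]
  have h1 : (Jmat n).mulVec v i = ∑ j, v j := by simp [Jmat, mulVec, dotProduct]
  simp only [Pi.sub_apply, one_mulVec, Pi.smul_apply, h1, smul_eq_mul]

lemma Pmat_transpose : (Pmat n)ᵀ = Pmat n := by
  simp [Pmat, transpose_sub, transpose_smul]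
  ext i j
  simp [Jmat]

lemma sum_Pmat_mulVec (hn : 0 < n) (v : Fin n → ℝ) :
    ∑ i, (Pmat n).mulVec v i = 0 := by
  have hne : (n : ℝ) ≠ 0 := Nat.cast_ne_zero.mpr hn.ne'
  simp only [Pmat_mulVec_apply]
  rw [Finset.sum_sub_distrib, Finset.sum_const, Finset.card_univ, Fintype.card_fin]
  rw [nsmul_eq_mul, ← mul_assoc, mul_inv_cancel₀ hne, one_mul, sub_self]

lemma Pmat_mulVec_of_sumzero {x : Fin n → ℝ} (hx : ∑ i, x i = 0) :
    (Pmat n).mulVec x = x := by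
  funext i; rw [Pmat_mulVec_apply, hx]; ring

lemma sum_sq_Pmat_mulVec (hn : 0 < n) (v : Fin n → ℝ) :
    ∑ i, ((Pmat n).mulVec v i) ^ 2 = ∑ i, v i ^ 2 - (∑ i, v i) ^ 2 / n := by
  have hne : (n : ℝ) ≠ 0 := Nat.cast_ne_zero.mpr hn.ne'
  simp only [Pmat_mulVec_apply]
  have h : ∀ i : Fin n, (v i - (n:ℝ)⁻¹ * ∑ j, v j) ^ 2
      = v i ^ 2 - 2 * (n:ℝ)⁻¹ * (∑ j, v j) * v i + ((n:ℝ)⁻¹ * ∑ j, v j)^2 := by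
    intro i; ring
  rw [Finset.sum_congr rfl fun i _ => h i]
  rw [Finset.sum_add_distrib, Finset.sum_sub_distrib, ← Finset.mul_sum, Finset.sum_const,
    Finset.card_univ, Fintype.card_fin]
  field_simp
  have hnn : (n:ℝ)^2 * (n:ℝ)⁻¹^2 = 1 := by rw [← mul_pow, mul_inv_cancel₀ hne, one_pow]
  linear_combination (∑ j, v j)^2 * hnn

lemma dot_Pmat_mulVec (v w : Fin n → ℝ) :
    v ⬝ᵥ (Pmat n).mulVec w = ((Pmat n).mulVec v) ⬝ᵥ w := by
  rw [dotProduct_mulVec, ← mulVec_transpose, Pmat_transpose]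

lemma quad_psd_form (z : ℝ) (B : Matrix (Fin n) (Fin n) ℝ) (v : Fin n → ℝ) :
    v ⬝ᵥ (z • (1 : Matrix (Fin n) (Fin n) ℝ) - Pmat n * B * Pmat n).mulVec v
      = z * ∑ i, v i ^ 2
        - ((Pmat n).mulVec v) ⬝ᵥ B.mulVec ((Pmat n).mulVec v) := by
  rw [sub_mulVec, dotProduct_sub, quad_smul_one]
  congr 1
  have h1 : (Pmat n * B * Pmat n).mulVec v
      = (Pmat n).mulVec (B.mulVec ((Pmat n).mulVec v)) := by
    rw [mulVec_mulVec, mulVec_mulVec]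
  rw [h1, dot_Pmat_mulVec, dotProduct_mulVec, ← mulVec_transpose]

lemma feas_to {z : ℝ} {B : Matrix (Fin n) (Fin n) ℝ}
    (h : (z • (1 : Matrix (Fin n) (Fin n) ℝ) - Pmat n * B * Pmat n).PosSemidef)
    {x : Fin n → ℝ} (hx : ∑ i, x i = 0) :
    x ⬝ᵥ B.mulVec x ≤ z * ∑ i, x i ^ 2 := by
  have := h.dotProduct_mulVec_nonneg x
  rw [star_trivial, quad_psd_form, Pmat_mulVec_of_sumzero hx] at this
  linarith

lemma feas_of (hn : 0 < n) {z : ℝ} {B : Matrix (Fin n) (Fin n) ℝ}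
    (hsym : Bᵀ = B) (hz : 0 ≤ z)
    (hq : ∀ x : Fin n → ℝ, ∑ i, x i = 0 → x ⬝ᵥ B.mulVec x ≤ z * ∑ i, x i ^ 2) :
    (z • (1 : Matrix (Fin n) (Fin n) ℝ) - Pmat n * B * Pmat n).PosSemidef := by
  refine posSemidef_iff_dotProduct_mulVec.mpr ⟨?_, ?_⟩
  · rw [IsHermitian, conjTranspose_eq_transpose_of_trivial, transpose_sub,
      transpose_smul, transpose_one, transpose_mul, transpose_mul, Pmat_transpose, hsym,
      Matrix.mul_assoc]
  · intro v
    rw [star_trivial, quad_psd_form]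
    set y := (Pmat n).mulVec v with hy
    have hsum : ∑ i, y i = 0 := sum_Pmat_mulVec hn v
    have h1 : y ⬝ᵥ B.mulVec y ≤ z * ∑ i, y i ^ 2 := hq y hsum
    have h2 : ∑ i, y i ^ 2 ≤ ∑ i, v i ^ 2 := by
      rw [hy, sum_sq_Pmat_mulVec hn]
      have : 0 ≤ (∑ i, v i) ^ 2 / n := by positivity
      linarith
    have := mul_le_mul_of_nonneg_left h2 hz
    linarith

/-- The Rayleigh-quotient set defining `lamS`. -/
def RSet (B : Matrix (Fin n) (Fin n) ℝ) : Set ℝ :=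
  {r | ∃ x : Fin n → ℝ, x ≠ 0 ∧ ∑ i, x i = 0 ∧
    r = (x ⬝ᵥ B.mulVec x) / (∑ i, (x i) ^ 2)}

lemma lamS_eq_sSup (B : Matrix (Fin n) (Fin n) ℝ) : lamS B = sSup (RSet B) := rfl

lemma RSet_nonempty (hn2 : 2 ≤ n) (B : Matrix (Fin n) (Fin n) ℝ) :
    (RSet B).Nonempty := by
  have h0 : (0 : ℕ) < n := by omega
  have h1 : (1 : ℕ) < n := by omega
  set i0 : Fin n := ⟨0, h0⟩
  set i1 : Fin n := ⟨1, h1⟩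
  have hne : i0 ≠ i1 := by simp [i0, i1, Fin.ext_iff]
  set x : Fin n → ℝ := Pi.single i0 1 - Pi.single i1 1 with hxdef
  have hx0 : x ≠ 0 := by
    intro h
    have := congrFun h i0
    simp [hxdef, Pi.single_eq_of_ne' hne.symm] at this
  have hxs : ∑ i, x i = 0 := by
    simp [hxdef, Finset.sum_sub_distrib, Finset.sum_pi_single']
  exact ⟨_, x, hx0, hxs, rfl⟩

lemma RSet_bddAbove (B : Matrix (Fin n) (Fin n) ℝ) : BddAbove (RSet B) := by
  refine ⟨∑ i, ∑ j, |B i j|, ?_⟩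
  rintro r ⟨x, hx0, _, rfl⟩
  have hs : 0 < ∑ i, x i ^ 2 := sum_sq_pos_of_ne_zero hx0
  rw [div_le_iff₀ hs]
  exact quad_abs_bound B x

lemma lamS_bound (hn2 : 2 ≤ n) (B : Matrix (Fin n) (Fin n) ℝ)
    {x : Fin n → ℝ} (hx : ∑ i, x i = 0) :
    x ⬝ᵥ B.mulVec x ≤ lamS B * ∑ i, x i ^ 2 := by
  by_cases hx0 : x = 0
  · subst hx0
    simp
  · have hs : 0 < ∑ i, x i ^ 2 := sum_sq_pos_of_ne_zero hx0
    have hr : (x ⬝ᵥ B.mulVec x) / (∑ i, x i ^ 2) ∈ RSet B := ⟨x, hx0, hx, rfl⟩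
    have := le_csSup (RSet_bddAbove B) hr
    rw [lamS_eq_sSup]
    calc x ⬝ᵥ B.mulVec x
        = ((x ⬝ᵥ B.mulVec x) / (∑ i, x i ^ 2)) * ∑ i, x i ^ 2 := by
          field_simp
      _ ≤ sSup (RSet B) * ∑ i, x i ^ 2 := by
          exact mul_le_mul_of_nonneg_right this hs.le

lemma lamS_le_of_bound (hn2 : 2 ≤ n) {B : Matrix (Fin n) (Fin n) ℝ} {z : ℝ}
    (h : ∀ x : Fin n → ℝ, ∑ i, x i = 0 → x ⬝ᵥ B.mulVec x ≤ z * ∑ i, x i ^ 2) :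
    lamS B ≤ z := by
  rw [lamS_eq_sSup]
  refine csSup_le (RSet_nonempty hn2 B) ?_
  rintro r ⟨x, hx0, hxs, rfl⟩
  have hs : 0 < ∑ i, x i ^ 2 := sum_sq_pos_of_ne_zero hx0
  rw [div_le_iff₀ hs]
  exact h x hxs

lemma ge_lamS_mem (hn2 : 2 ≤ n) (B : Matrix (Fin n) (Fin n) ℝ)
    {x : Fin n → ℝ} (hx0 : x ≠ 0) (hxs : ∑ i, x i = 0) :
    (x ⬝ᵥ B.mulVec x) / (∑ i, x i ^ 2) ≤ lamS B :=
  le_csSup (RSet_bddAbove B) ⟨x, hx0, hxs, rfl⟩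

end Aux

section Graph
variable {n : ℕ} (G : SimpleGraph (Fin n)) [DecidableRel G.Adj]

lemma adjA_transpose : (adjA G)ᵀ = adjA G := by
  ext i j
  simp only [transpose_apply, adjA, Matrix.of_apply]
  congr 1
  simp only [eq_iff_iff]
  exact G.adj_comm j i

lemma B_transpose (d : Fin n → ℝ) :
    (adjA G + Matrix.diagonal d)ᵀ = adjA G + Matrix.diagonal d := by
  rw [transpose_add, adjA_transpose, diagonal_transpose]

lemma msum_diagonal (d : Fin n → ℝ) : msum (Matrix.diagonal d) = ∑ i, d i := by
  unfold msum
  apply Finset.sum_congr rfl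
  intro i _
  simp [Matrix.diagonal_apply]

lemma msum_adjA : msum (adjA G) = 2 * (edgeCount G : ℝ) := by
  unfold msum adjA
  have h : ∀ i : Fin n, ∑ j, (if G.Adj i j then (1:ℝ) else 0) = (G.degree i : ℝ) := by
    intro i
    rw [Finset.sum_boole, SimpleGraph.degree]
    congr 1
    rw [SimpleGraph.neighborFinset_eq_filter]
  simp only [Matrix.of_apply]
  rw [Finset.sum_congr rfl fun i _ => h i]
  rw [← Nat.cast_sum]
  rw [SimpleGraph.sum_degrees_eq_twice_card_edges]
  push_cast [edgeCount]
  ring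

lemma msum_B (d : Fin n → ℝ) :
    msum (adjA G + Matrix.diagonal d) = 2 * (edgeCount G : ℝ) + ∑ i, d i := by
  have : msum (adjA G + Matrix.diagonal d) = msum (adjA G) + msum (Matrix.diagonal d) := by
    unfold msum
    rw [← Finset.sum_add_distrib]
    apply Finset.sum_congr rfl; intros
    rw [← Finset.sum_add_distrib]
    apply Finset.sum_congr rfl; intros
    simp
  rw [this, msum_adjA, msum_diagonal]

lemma gB_val (d : Fin n → ℝ) :
    (n : ℝ) * lamS (adjA G + Matrix.diagonal d) - ∑ i, d i
      = 2 * (edgeCount G : ℝ) - 4 * gB G d := by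
  unfold gB
  rw [msum_B]
  ring

lemma diagonal_shift (d : Fin n → ℝ) (t : ℝ) :
    Matrix.diagonal (fun i => d i + t)
      = Matrix.diagonal d + t • (1 : Matrix (Fin n) (Fin n) ℝ) := by
  ext i j
  by_cases h : i = j
  · subst h; simp [Matrix.diagonal_apply_eq, Matrix.one_apply_eq]
  · simp [Matrix.diagonal_apply_ne _ h, Matrix.one_apply_ne h]

/-- There is a `±1` vector of sum zero (`n` even, `n ≥ 2`). -/
lemma exists_pm_one_sumzero (hn2 : 2 ≤ n) (hne : Even n) :
    ∃ x : Fin n → ℝ, (∀ i, x i = 1 ∨ x i = -1) ∧ ∑ i, x i = 0 := by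
  obtain ⟨m, hm⟩ := hne
  refine ⟨fun i => if (i : ℕ) < m then 1 else -1, fun i => by by_cases h : (i:ℕ) < m <;> simp [h], ?_⟩
  rw [Fin.sum_univ_eq_sum_range (fun k => if k < m then (1:ℝ) else -1) n]
  subst hm
  rw [Finset.range_eq_Ico, ← Finset.sum_Ico_consecutive _ (Nat.zero_le m) (Nat.le_add_right m m)]
  have h1 : ∑ k ∈ Finset.Ico 0 m, (if k < m then (1:ℝ) else -1) = m := by
    rw [Finset.sum_congr rfl fun k hk => if_pos (Finset.mem_Ico.mp hk).2]
    simp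
  have h2 : ∑ k ∈ Finset.Ico m (m + m), (if k < m then (1:ℝ) else -1) = -m := by
    rw [Finset.sum_congr rfl fun k hk => if_neg (by
      have := (Finset.mem_Ico.mp hk).1; omega)]
    simp [Nat.card_Ico]
  rw [h1, h2]
  ring

/-- `gB` is uniformly bounded above. -/
lemma gB_bounded (hn2 : 2 ≤ n) (hne : Even n) :
    ∃ c : ℝ, ∀ d : Fin n → ℝ, gB G d ≤ c := by
  obtain ⟨x, hx1, hxs⟩ := exists_pm_one_sumzero hn2 hne
  have hxsq : ∀ i, x i ^ 2 = 1 := by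
    intro i; rcases hx1 i with h | h <;> rw [h] <;> norm_num
  have hsum_sq : ∑ i, x i ^ 2 = (n : ℝ) := by
    rw [Finset.sum_congr rfl fun i _ => hxsq i]; simp
  have hx0 : x ≠ 0 := by
    intro h
    have h2 : x ⟨0, by omega⟩ = 0 := congrFun h _
    rcases hx1 ⟨0, by omega⟩ with h1 | h1 <;> rw [h1] at h2 <;> norm_num at h2
  refine ⟨(2 * (edgeCount G : ℝ) - x ⬝ᵥ (adjA G).mulVec x) / 4, fun d => ?_⟩
  have hn0 : (0 : ℝ) < n := by positivity
  -- lamS (B d) ≥ (xᵀ B x) / n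
  have hmem := ge_lamS_mem hn2 (adjA G + Matrix.diagonal d) hx0 hxs
  rw [hsum_sq] at hmem
  have hquad : x ⬝ᵥ (adjA G + Matrix.diagonal d).mulVec x
      = x ⬝ᵥ (adjA G).mulVec x + ∑ i, d i := by
    rw [quad_add', quad_diagonal]
    congr 1
    apply Finset.sum_congr rfl
    intro i _; rw [hxsq i, mul_one]
  have hlam : x ⬝ᵥ (adjA G).mulVec x + ∑ i, d i
      ≤ (n : ℝ) * lamS (adjA G + Matrix.diagonal d) := by
    rw [← hquad]
    calc x ⬝ᵥ (adjA G + Matrix.diagonal d).mulVec x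
        = (x ⬝ᵥ (adjA G + Matrix.diagonal d).mulVec x / n) * n := by field_simp
      _ ≤ lamS (adjA G + Matrix.diagonal d) * n := mul_le_mul_of_nonneg_right hmem hn0.le
      _ = (n : ℝ) * lamS (adjA G + Matrix.diagonal d) := mul_comm _ _
  unfold gB
  rw [msum_B]
  have := hlam
  linarith

end Graph

/-- `h(G) = |E|/2 - p(G)/4`. -/
theorem h_eq_primal_sdp {n : ℕ} (hn2 : 2 ≤ n) (hne : Even n)
    (G : SimpleGraph (Fin n)) [DecidableRel G.Adj] :
    hB G = (edgeCount G : ℝ) / 2 - pSDP G / 4 := by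
  have hn0 : 0 < n := by omega
  set E : ℝ := (edgeCount G : ℝ) with hE
  set Sg : Set ℝ := {r | ∃ d : Fin n → ℝ, r = gB G d} with hSg
  set Sp : Set ℝ := {r | ∃ (z : ℝ) (d : Fin n → ℝ),
    (z • (1 : Matrix (Fin n) (Fin n) ℝ)
      - Pmat n * (adjA G + Matrix.diagonal d) * Pmat n).PosSemidef ∧
    r = (n : ℝ) * z - ∑ i, d i} with hSp
  obtain ⟨c, hc⟩ := gB_bounded G hn2 hne
  -- Feasible values dominate 2E - 4 gB d
  have key1 : ∀ r ∈ Sp, ∃ d : Fin n → ℝ, r ≥ 2 * E - 4 * gB G d := by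
    rintro r ⟨z, d, hpsd, rfl⟩
    refine ⟨d, ?_⟩
    have hlam : lamS (adjA G + Matrix.diagonal d) ≤ z :=
      lamS_le_of_bound hn2 fun x hx => feas_to hpsd hx
    have h1 := gB_val G d
    have h2 : (n : ℝ) * lamS (adjA G + Matrix.diagonal d) ≤ (n : ℝ) * z :=
      mul_le_mul_of_nonneg_left hlam (by positivity)
    rw [← hE] at h1
    linarith
  -- For every d there is a feasible point of value exactly 2E - 4 gB d
  have key2 : ∀ d : Fin n → ℝ, (2 * E - 4 * gB G d) ∈ Sp := by
    intro d
    set lam := lamS (adjA G + Matrix.diagonal d) with hlamdef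
    set t : ℝ := max 0 (-lam) with ht
    refine ⟨lam + t, fun i => d i + t, ?_, ?_⟩
    · have hBt : adjA G + Matrix.diagonal (fun i => d i + t)
          = (adjA G + Matrix.diagonal d) + t • (1 : Matrix (Fin n) (Fin n) ℝ) := by
        rw [diagonal_shift]
        abel
      rw [hBt]
      refine feas_of hn0 ?_ ?_ ?_
      · rw [transpose_add, B_transpose, transpose_smul, transpose_one]
      · have : -lam ≤ t := le_max_right _ _
        linarith
      · intro x hx
        rw [quad_add', quad_smul_one]
        have := lamS_bound hn2 (adjA G + Matrix.diagonal d) hx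
        rw [← hlamdef] at this
        linarith
    · have hval := gB_val G d
      rw [← hE, ← hlamdef] at hval
      have hsum : ∑ i, (d i + t) = (∑ i, d i) + n * t := by
        rw [Finset.sum_add_distrib, Finset.sum_const, Finset.card_univ, Fintype.card_fin,
          nsmul_eq_mul]
      rw [hsum]
      linarith
  have Sg_ne : Sg.Nonempty := ⟨gB G 0, 0, rfl⟩
  have Sg_bdd : BddAbove Sg := ⟨c, by rintro r ⟨d, rfl⟩; exact hc d⟩
  have Sp_ne : Sp.Nonempty := ⟨_, key2 0⟩
  have Sp_bdd : BddBelow Sp := by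
    refine ⟨2 * E - 4 * c, ?_⟩
    intro r hr
    obtain ⟨d, hd⟩ := key1 r hr
    have := hc d
    linarith
  have hhB : hB G = sSup Sg := rfl
  have hpG : pSDP G = sInf Sp := rfl
  rw [hhB, hpG]
  apply le_antisymm
  · -- sSup Sg ≤ E/2 - sInf Sp / 4
    refine csSup_le Sg_ne ?_
    rintro r ⟨d, rfl⟩
    have h1 : sInf Sp ≤ 2 * E - 4 * gB G d := csInf_le Sp_bdd (key2 d)
    linarith
  · -- E/2 - sInf Sp / 4 ≤ sSup Sg
    have h2 : 2 * E - 4 * sSup Sg ≤ sInf Sp := by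
      refine le_csInf Sp_ne ?_
      intro r hr
      obtain ⟨d, hd⟩ := key1 r hr
      have h3 : gB G d ≤ sSup Sg := le_csSup Sg_bdd ⟨d, rfl⟩
      linarith
    linarith
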